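/- Let p be an odd prime, f(z) = z^p + c ∈ ℤ[z] with c not a p-th power in ℤ and c > 0. Then f^n(z) is irreducible over ℚ(ζ_p) for all n ≥ 1. -/

import Mathlib

open Polynomial IntermediateField

/-- The polynomial giving the `n`-th iterate of `f(z) = z^d + c`. -/
noncomputable def iteratePoly (K : Type*) [Field K] (d : ℕ) (c : K) : ℕ → Polynomial K :=
  fun n => (fun q : Polynomial K => q.comp (X ^ d + C c))^[n] X

/-- Integer orbit of `0` under `z ↦ z^p + c`. -/
def intIter (p : ℕ) (c : ℤ) : ℕ → ℤ
  | 0 => 0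
  | n + 1 => intIter p c n ^ p + c

lemma intIter_nonneg (p : ℕ) {c : ℤ} (hc : 0 < c) (n : ℕ) : 0 ≤ intIter p c n := by
  induction n with
  | zero => simp [intIter]
  | succ n ih =>
    have : (0:ℤ) ≤ intIter p c n ^ p := pow_nonneg ih p
    simp only [intIter]
    linarith

lemma le_intIter (p : ℕ) {c : ℤ} (hc : 0 < c) {n : ℕ} (hn : 1 ≤ n) : c ≤ intIter p c n := by
  obtain ⟨m, rfl⟩ := Nat.exists_eq_add_of_le hn
  have : (0:ℤ) ≤ intIter p c m ^ p := pow_nonneg (intIter_nonneg p hc m) p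
  have h1 : intIter p c (1 + m) = intIter p c (m + 1) := by rw [Nat.add_comm]
  rw [h1]
  simp only [intIter]
  linarith

lemma intIter_not_pow {p : ℕ} (hp : p.Prime) (hodd : Odd p) {c : ℤ} (hc : 0 < c)
    (hcp : ¬ ∃ m : ℤ, c = m ^ p) {n : ℕ} (hn : 1 ≤ n) (m : ℤ) :
    m ^ p ≠ intIter p c n := by
  induction n with
  | zero => omega
  | succ n ih =>
    rcases Nat.eq_or_lt_of_le hn with h1 | h1
    · -- n + 1 = 1
      have hn0 : n = 0 := by omega
      subst hn0
      intro h
      apply hcp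
      refine ⟨m, ?_⟩
      have : intIter p c 1 = c := by
        simp [intIter, zero_pow hp.ne_zero]
      rw [this] at h
      exact h.symm
    · -- n ≥ 1
      have hn1 : 1 ≤ n := by omega
      have ha : c ≤ intIter p c n := le_intIter p hc hn1
      set a := intIter p c n with hadef
      have ha1 : (1:ℤ) ≤ a := le_trans hc ha
      intro h
      have hval : intIter p c (n + 1) = a ^ p + c := rfl
      rw [hval] at h
      -- a^p < m^p, so a < m
      have hlt : a ^ p < m ^ p := by linarith
      have ham : a < m := by
        have := (hodd.strictMono_pow (R := ℤ)).lt_iff_lt (a := a) (b := m)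
        exact this.mp hlt
      have ham1 : a + 1 ≤ m := by omega
      -- (a+1)^p > a^p + c
      have hp1 : 1 ≤ p := hp.one_lt.le
      have hpm : p - 1 + 1 = p := Nat.succ_pred_eq_of_pos hp.pos
      have hne : p - 1 ≠ 0 := by
        have := hp.two_le; omega
      have key1 : a ^ (p-1) < (a + 1) ^ (p-1) := by
        apply pow_lt_pow_left₀ (by linarith) (by linarith) hne
      have key2 : a ^ (p-1) * (a + 1) < (a + 1) ^ (p-1) * (a + 1) :=
        mul_lt_mul_of_pos_right key1 (by linarith)
      have key3 : (a + 1) ^ (p-1) * (a + 1) = (a + 1) ^ p := by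
        rw [← pow_succ, hpm]
      have key4 : a ^ (p-1) * (a + 1) = a ^ p + a ^ (p-1) := by
        have : a ^ (p-1) * a = a ^ p := by rw [← pow_succ, hpm]
        ring_nf
        linarith [this]
      have key5 : a ≤ a ^ (p-1) := le_self_pow₀ ha1 hne
      have hmp : (a+1) ^ p ≤ m ^ p :=
        pow_le_pow_left₀ (by linarith) ham1 p
      -- combine: m^p = a^p + c ≤ a^p + a ≤ a^p + a^(p-1) < (a+1)^p ≤ m^p
      have : a ^ p + c < (a+1)^p := by
        calc a ^ p + c ≤ a ^ p + a := by linarith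
        _ ≤ a ^ p + a ^ (p-1) := by linarith
        _ < (a+1)^p := by linarith [key2, key3, key4]
      linarith

lemma rat_not_pow {p : ℕ} (hp : p.Prime) {a : ℤ}
    (ha : ∀ m : ℤ, m ^ p ≠ a) (q : ℚ) : q ^ p ≠ (a : ℚ) := by
  intro h
  have hint : IsIntegral ℤ q := by
    refine ⟨X ^ p - C a, monic_X_pow_sub_C a hp.ne_zero, ?_⟩
    have : eval₂ (algebraMap ℤ ℚ) q (X ^ p - C a) = q ^ p - (a : ℚ) := by
      rw [eval₂_sub, eval₂_pow, eval₂_X, eval₂_C]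
      norm_num
    rw [this, h, sub_self]
  obtain ⟨m, hm⟩ := IsIntegrallyClosed.isIntegral_iff.mp hint
  apply ha m
  have : ((m : ℚ)) ^ p = (a : ℚ) := by
    rw [show ((m:ℚ)) = q from hm, h]
  exact_mod_cast this

lemma cyclo_not_pow {p : ℕ} [NeZero p] (hp : p.Prime) {a : ℤ}
    (ha : ∀ m : ℤ, m ^ p ≠ a)
    (b : CyclotomicField p ℚ) : b ^ p ≠ ((a : ℤ) : CyclotomicField p ℚ) := by
  intro hpow
  haveI : IsCyclotomicExtension {p} ℚ (CyclotomicField p ℚ) := CyclotomicField.isCyclotomicExtension p ℚ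
  haveI : FiniteDimensional ℚ (CyclotomicField p ℚ) :=
    IsCyclotomicExtension.finiteDimensional {p} ℚ _
  have hirr : Irreducible (X ^ p - C ((a : ℚ))) :=
    X_pow_sub_C_irreducible_of_prime hp (rat_not_pow hp ha)
  have hroot : aeval b (X ^ p - C ((a:ℚ))) = 0 := by
    have h1 : aeval b (X ^ p - C ((a:ℚ)))
        = b ^ p - algebraMap ℚ (CyclotomicField p ℚ) ((a:ℚ)) := by
      simp
    have h2 : (algebraMap ℚ (CyclotomicField p ℚ)) ((a:ℚ))
        = ((a : ℤ) : CyclotomicField p ℚ) := by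
      rw [eq_ratCast]
      push_cast
      ring
    rw [h1, h2, hpow, sub_self]
  have hmin : minpoly ℚ b = X ^ p - C ((a:ℚ)) :=
    (minpoly.eq_of_irreducible_of_monic hirr hroot (monic_X_pow_sub_C _ hp.ne_zero)).symm
  have hbint : IsIntegral ℚ b := IsIntegral.of_finite ℚ b
  have hdvd : (minpoly ℚ b).natDegree ∣ Module.finrank ℚ (CyclotomicField p ℚ) :=
    minpoly.degree_dvd hbint
  rw [hmin, natDegree_X_pow_sub_C] at hdvd
  have hfr : Module.finrank ℚ (CyclotomicField p ℚ) = Nat.totient p := by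
    have := IsCyclotomicExtension.finrank (n := p)
      (CyclotomicField p ℚ)
      (cyclotomic.irreducible_rat (n := p) (by exact hp.pos))
    simpa using this
  rw [hfr, Nat.totient_prime hp] at hdvd
  have h2 := hp.two_le
  have := Nat.le_of_dvd (by omega) hdvd
  omega

set_option maxHeartbeats 1000000 in
/-- Key Capelli-type step: if `g` is monic irreducible and `g(c)` is not a `p`-th power,
then `g(X^p + c)` is irreducible. -/
lemma capelli_step {K : Type*} [Field K] {p : ℕ} (hp : p.Prime) (hodd : Odd p)
    (cK : K) {g : K[X]} (hgm : g.Monic) (hg : Irreducible g)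
    (H : ∀ b : K, b ^ p ≠ g.eval cK) :
    Irreducible (g.comp (X ^ p + C cK)) := by
  apply Polynomial.irreducible_comp hgm (monic_X_pow_add_C cK hp.ne_zero) hg
  intro E _ _ x hx
  have hxint : IsIntegral K x := by
    by_contra hni
    have := minpoly.eq_zero hni
    rw [hx] at this
    exact hg.ne_zero this
  -- rewrite the target as X^p - C (gen - c)
  have htarget : (X ^ p + C cK).map (algebraMap K K⟮x⟯) - C (AdjoinSimple.gen K x)
      = X ^ p - C (AdjoinSimple.gen K x - algebraMap K K⟮x⟯ cK) := by
    rw [Polynomial.map_add, Polynomial.map_pow, map_X, map_C, map_sub]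
    abel
  rw [htarget]
  apply X_pow_sub_C_irreducible_of_prime hp
  intro b hb
  -- norm argument
  letI pb : PowerBasis K K⟮x⟯ := adjoin.powerBasis hxint
  haveI := pb.finite
  set y : K⟮x⟯ := AdjoinSimple.gen K x - algebraMap K K⟮x⟯ cK with hy
  have hyint : IsIntegral K y := IsIntegral.of_finite K y
  have hgenmem : pb.gen ∈ Algebra.adjoin K ({y} : Set K⟮x⟯) := by
    have hgen : pb.gen = y + algebraMap K K⟮x⟯ cK := by
      rw [hy, adjoin.powerBasis_gen]
      ring
    rw [hgen]
    exact Subalgebra.add_mem _ (Algebra.subset_adjoin (Set.mem_singleton y))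
      (Subalgebra.algebraMap_mem _ _)
  letI pb' : PowerBasis K K⟮x⟯ := PowerBasis.ofAdjoinEqTop' hyint (PowerBasis.adjoin_eq_top_of_gen_mem_adjoin hgenmem)
  have hgen' : pb'.gen = y := PowerBasis.ofAdjoinEqTop'_gen _ _
  -- minpoly of y
  have hminy : minpoly K y = g.comp (X + C cK) := by
    rw [hy, minpoly.sub_algebraMap, minpoly_gen, hx]
  -- norm of y
  have hnormy : Algebra.norm K y = (-1) ^ pb'.dim * g.eval cK := by
    have := Algebra.PowerBasis.norm_gen_eq_coeff_zero_minpoly pb'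
    rw [hgen', hminy] at this
    rw [this]
    congr 1
    rw [coeff_zero_eq_eval_zero, eval_comp]
    simp
  -- derive contradiction
  apply H ((-1) ^ pb'.dim * Algebra.norm K b)
  have hnb : (Algebra.norm K b) ^ p = Algebra.norm K y := by
    rw [← map_pow, hb]
  have hsign : ((-1 : K) ^ pb'.dim) ^ p = (-1) ^ pb'.dim := by
    rw [← pow_mul, mul_comm, pow_mul, hodd.neg_one_pow]
  calc ((-1) ^ pb'.dim * Algebra.norm K b) ^ p
      = ((-1 : K) ^ pb'.dim) ^ p * (Algebra.norm K b) ^ p := by rw [mul_pow]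
    _ = (-1) ^ pb'.dim * ((-1) ^ pb'.dim * g.eval cK) := by rw [hsign, hnb, hnormy]
    _ = ((-1) ^ pb'.dim * (-1) ^ pb'.dim) * g.eval cK := by ring
    _ = g.eval cK := by
        rw [← pow_add, ← two_mul, pow_mul, neg_one_sq, one_pow, one_mul]

lemma iteratePoly_succ (K : Type*) [Field K] (d : ℕ) (c : K) (n : ℕ) :
    iteratePoly K d c (n + 1) = (iteratePoly K d c n).comp (X ^ d + C c) := by
  simp only [iteratePoly, Function.iterate_succ_apply']

lemma iteratePoly_eval {K : Type*} [Field K] {p : ℕ} (hp : p ≠ 0) (c : ℤ) (n m : ℕ) :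
    (iteratePoly K p ((c : ℤ) : K) n).eval ((intIter p c m : ℤ) : K)
      = ((intIter p c (m + n) : ℤ) : K) := by
  induction n generalizing m with
  | zero => simp [iteratePoly]
  | succ n ih =>
    rw [iteratePoly_succ, eval_comp]
    have : (X ^ p + C ((c:ℤ):K)).eval ((intIter p c m : ℤ) : K)
        = ((intIter p c (m+1) : ℤ) : K) := by
      simp only [eval_add, eval_pow, eval_X, eval_C]
      show ((intIter p c m : ℤ) : K) ^ p + ((c : ℤ) : K) = _
      have : intIter p c (m+1) = intIter p c m ^ p + c := rfl
      rw [this]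
      push_cast
      ring
    rw [this, ih (m+1)]
    have e : m + 1 + n = m + (n + 1) := by omega
    rw [e]

lemma iteratePoly_monic {K : Type*} [Field K] {p : ℕ} (hp : p ≠ 0) (c : K) (n : ℕ) :
    (iteratePoly K p c n).Monic := by
  induction n with
  | zero => exact monic_X
  | succ n ih =>
    rw [iteratePoly_succ]
    exact ih.comp (monic_X_pow_add_C c hp) (by rw [natDegree_X_pow_add_C]; exact hp)

theorem iterates_irreducible_over_cyclotomic
    (p : ℕ) (hp : p.Prime) (hodd : Odd p) (c : ℤ) (hc : 0 < c)
    (hcp : ¬ ∃ m : ℤ, c = m ^ p) (n : ℕ) (hn : 1 ≤ n) :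
    Irreducible (iteratePoly ((haveI : NeZero p := ⟨hp.ne_zero⟩; CyclotomicField p ℚ)) p (c : (haveI : NeZero p := ⟨hp.ne_zero⟩; CyclotomicField p ℚ)) n) := by
  haveI : NeZero p := ⟨hp.ne_zero⟩
  set K := CyclotomicField p ℚ
  clear hn
  have hcp' : ¬ ∃ m : ℤ, c = m ^ p := hcp
  induction n with
  | zero => exact irreducible_X
  | succ n ih =>
    rw [iteratePoly_succ]
    apply capelli_step hp hodd _ (iteratePoly_monic hp.ne_zero _ n) ih
    intro b hb
    have hc1 : intIter p c 1 = c := by simp [intIter, zero_pow hp.ne_zero]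
    have heval := iteratePoly_eval (K := K) hp.ne_zero c n 1
    rw [hc1] at heval
    rw [heval] at hb
    have ha : ∀ m : ℤ, m ^ p ≠ intIter p c (1 + n) :=
      intIter_not_pow hp hodd hc hcp (by omega)
    exact cyclo_not_pow hp ha b hb
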